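/- Let n ≥ 1, s ∈ (0, n/2) and T > 1. Let N ∈ ℤ and let (a_k)_{k∈ℤ} be a bounded, nonnegative, decreasing sequence of real numbers with a_k = 0 for every k ≥ N. Then Σ_{k∈ℤ} a_k^{(n−2s)/n} T^k ≤ C(n,s,T) Σ_{k∈ℤ, a_k≠0} a_{k+1} a_k^{−2s/n} T^k, for a suitable constant C(n,s,T) > 0 independent of N and of the sequence. -/

import Mathlib

open Set

private lemma geom_summable_aux (T : ℝ) (hT : 1 < T) (c : ℝ) (N : ℤ) (f : ℤ → ℝ)
    (h0 : ∀ k, 0 ≤ f k) (hle : ∀ k, f k ≤ c * T ^ k) (hN : ∀ k, N ≤ k → f k = 0) :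
    Summable f := by
  have hT0 : (0:ℝ) < T := lt_trans one_pos hT
  set i : ℕ → ℤ := fun m => N - 1 - m with hi
  have hinj : Function.Injective i := by
    intro x y hxy
    simp only [hi] at hxy
    omega
  have hvan : ∀ k ∉ Set.range i, f k = 0 := by
    intro k hk
    apply hN
    by_contra hlt
    push_neg at hlt
    exact hk ⟨(N - 1 - k).toNat, by simp only [hi]; omega⟩
  rw [← Function.Injective.summable_iff hinj hvan]
  refine Summable.of_nonneg_of_le (f := fun m : ℕ => (c * T ^ (N - 1)) * T⁻¹ ^ m)
    (fun m => h0 _) (fun m => ?_) ?_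
  · refine le_trans (hle _) (le_of_eq ?_)
    simp only [hi]
    rw [mul_assoc]
    congr 1
    rw [show (N - 1 - (m:ℤ)) = (N - 1) + (-(m:ℤ)) by ring, zpow_add₀ hT0.ne']
    congr 1
    rw [zpow_neg, ← inv_zpow, zpow_natCast]
  · exact (summable_geometric_of_lt_one (by positivity)
      (inv_lt_one_of_one_lt₀ hT)).mul_left _

/-- Summability lemma: for a bounded nonnegative decreasing sequence `(a_k)_{k ∈ ℤ}`
vanishing for `k ≥ N`,
`Σ_k a_k^{(n-2s)/n} T^k ≤ C(n,s,T) Σ_{a_k ≠ 0} a_{k+1} a_k^{-2s/n} T^k`,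
with `C` independent of `N` and of the sequence. -/
theorem summability_lemma (n : ℕ) (hn : 1 ≤ n) (s : ℝ) (hs0 : 0 < s) (hsn : s < n / 2)
    (T : ℝ) (hT : 1 < T) :
    ∃ C > (0:ℝ), ∀ (a : ℤ → ℝ) (N : ℤ),
      (∀ k, 0 ≤ a k) → Antitone a → BddAbove (Set.range a) → (∀ k, N ≤ k → a k = 0) →
      ∑' k : ℤ, a k ^ (((n : ℝ) - 2 * s) / n) * T ^ k ≤
        C * ∑' k : {k : ℤ // a k ≠ 0},
              a ((k : ℤ) + 1) * a (k : ℤ) ^ (-(2 * s / (n : ℝ))) * T ^ (k : ℤ) := by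
  have hT0 : (0:ℝ) < T := lt_trans one_pos hT
  have hn0 : (0:ℝ) < (n:ℝ) := by exact_mod_cast Nat.pos_of_ne_zero (by omega)
  set θ : ℝ := ((n : ℝ) - 2 * s) / n with hθdef
  have hθ0 : 0 < θ := div_pos (by linarith) hn0
  have hexp : -(2 * s / (n:ℝ)) = θ - 1 := by
    field_simp [hθdef]
    rw [hθdef]; field_simp; ring
  have hexp_ne : -(2 * s / (n:ℝ)) ≠ 0 := by
    have : 0 < 2 * s / (n:ℝ) := by positivity
    linarith
  set l : ℝ := ((2 * T)⁻¹) ^ (θ⁻¹ : ℝ) with hldef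
  have hl0 : 0 < l := Real.rpow_pos_of_pos (by positivity) _
  have hlθ : l ^ θ = (2 * T)⁻¹ := Real.rpow_inv_rpow (by positivity) hθ0.ne'
  refine ⟨2 * T / l, by positivity, ?_⟩
  intro a N ha0 hanti hbdd hvanish
  obtain ⟨M, hM⟩ := hbdd
  simp only [mem_upperBounds, Set.mem_range, forall_exists_index] at hM
  have hM' : ∀ k, a k ≤ M := fun k => hM _ k rfl
  have hM0 : 0 ≤ M := le_trans (ha0 0) (hM' 0)
  set b : ℤ → ℝ := fun k => a k ^ θ * T ^ k with hbdef
  set r : ℤ → ℝ := fun k => a (k + 1) * a k ^ (-(2 * s / (n:ℝ))) * T ^ k with hrdef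
  -- basic facts
  have hb0 : ∀ k, 0 ≤ b k := fun k => mul_nonneg (Real.rpow_nonneg (ha0 k) _) (zpow_pos hT0 _).le
  have hr0 : ∀ k, 0 ≤ r k := fun k =>
    mul_nonneg (mul_nonneg (ha0 _) (Real.rpow_nonneg (ha0 k) _)) (zpow_pos hT0 _).le
  have hbN : ∀ k, N ≤ k → b k = 0 := by
    intro k hk
    simp [hbdef, hvanish k hk, Real.zero_rpow hθ0.ne']
  have hr_zero : ∀ k, a k = 0 → r k = 0 := by
    intro k hk
    simp [hrdef, hk, Real.zero_rpow hexp_ne]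
  have hrN : ∀ k, N ≤ k → r k = 0 := fun k hk => hr_zero k (hvanish k hk)
  have hb_le : ∀ k, b k ≤ M ^ θ * T ^ k := by
    intro k
    exact mul_le_mul_of_nonneg_right (Real.rpow_le_rpow (ha0 k) (hM' k) hθ0.le)
      (zpow_pos hT0 _).le
  have hr_le : ∀ k, r k ≤ M ^ θ * T ^ k := by
    intro k
    rcases eq_or_lt_of_le (ha0 k) with h | h
    · rw [hr_zero k h.symm]; positivity
    · have h1 : a (k + 1) * a k ^ (-(2 * s / (n:ℝ))) ≤ a k ^ θ := by
        rw [hexp]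
        calc a (k+1) * a k ^ (θ - 1) ≤ a k * a k ^ (θ - 1) :=
              mul_le_mul_of_nonneg_right (hanti (by linarith)) (Real.rpow_nonneg (ha0 k) _)
          _ = a k ^ θ := by
              rw [← Real.rpow_one_add' (ha0 k) (by rw [add_sub_cancel]; exact hθ0.ne')]
              ring_nf
      calc r k ≤ a k ^ θ * T ^ k := mul_le_mul_of_nonneg_right h1 (zpow_pos hT0 _).le
        _ ≤ M ^ θ * T ^ k := mul_le_mul_of_nonneg_right
              (Real.rpow_le_rpow (ha0 k) (hM' k) hθ0.le) (zpow_pos hT0 _).le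
  have hsum_b : Summable b := geom_summable_aux T hT _ N b hb0 hb_le hbN
  have hsum_r : Summable r := geom_summable_aux T hT _ N r hr0 hr_le hrN
  -- key pointwise inequality
  have key : ∀ k : ℤ, b k ≤ (T / l) * r (k - 1) + (1 / 2) * b (k - 1) := by
    intro k
    have hkk : a k ≤ a (k - 1) := hanti (by linarith)
    have ht : (0:ℝ) < T ^ (k - 1 : ℤ) := zpow_pos hT0 _
    have hTk : (T:ℝ) ^ k = T * T ^ (k - 1 : ℤ) := by
      rw [mul_comm, ← zpow_add_one₀ hT0.ne' (k - 1), sub_add_cancel]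
    have hr1 : r (k - 1) = a k * a (k - 1) ^ (θ - 1) * T ^ (k - 1 : ℤ) := by
      simp [hrdef, hexp, sub_add_cancel]
    simp only [hbdef, hr1, hTk]
    rcases eq_or_lt_of_le (ha0 (k - 1)) with hx | hx
    · have hy : a k = 0 := le_antisymm (hx ▸ hkk) (ha0 k)
      rw [hy, ← hx, Real.zero_rpow hθ0.ne']
      have : (0:ℝ) ^ (θ - 1) = 0 := Real.zero_rpow (by rw [hexp] at hexp_ne; exact hexp_ne)
      rw [this]
      simp
    · rcases le_or_gt (a k) (l * a (k - 1)) with h | h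
      · -- small case : use the second term
        have h1 : a k ^ θ ≤ (2 * T)⁻¹ * a (k - 1) ^ θ := by
          calc a k ^ θ ≤ (l * a (k - 1)) ^ θ := Real.rpow_le_rpow (ha0 k) h hθ0.le
            _ = l ^ θ * a (k - 1) ^ θ := Real.mul_rpow hl0.le (ha0 _)
            _ = (2 * T)⁻¹ * a (k - 1) ^ θ := by rw [hlθ]
        have h2 : (0:ℝ) ≤ T / l * (a k * a (k - 1) ^ (θ - 1) * T ^ (k - 1 : ℤ)) := by
          have := Real.rpow_nonneg (ha0 (k - 1)) (θ - 1)
          have := ha0 k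
          positivity
        have h3 : a k ^ θ * (T * T ^ (k - 1 : ℤ)) ≤ 1 / 2 * (a (k - 1) ^ θ * T ^ (k - 1 : ℤ)) := by
          have := mul_le_mul_of_nonneg_right h1 (mul_nonneg hT0.le ht.le)
          calc a k ^ θ * (T * T ^ (k - 1 : ℤ))
              ≤ (2 * T)⁻¹ * a (k - 1) ^ θ * (T * T ^ (k - 1 : ℤ)) := this
            _ = 1 / 2 * (a (k - 1) ^ θ * T ^ (k - 1 : ℤ)) := by
                field_simp
        linarith
      · -- large case : use the first term
        have hmono : a k ^ θ ≤ a (k - 1) ^ θ := Real.rpow_le_rpow (ha0 k) hkk hθ0.le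
        have hxθ : a (k - 1) * a (k - 1) ^ (θ - 1) = a (k - 1) ^ θ := by
          rw [← Real.rpow_one_add' (ha0 _) (by rw [add_sub_cancel]; exact hθ0.ne')]
          ring_nf
        have hpow_pos : 0 < a (k - 1) ^ (θ - 1) := Real.rpow_pos_of_pos hx _
        have h1 : l * a (k - 1) ^ θ ≤ a k * a (k - 1) ^ (θ - 1) := by
          calc l * a (k - 1) ^ θ = (l * a (k - 1)) * a (k - 1) ^ (θ - 1) := by
                rw [mul_assoc, hxθ]
            _ ≤ a k * a (k - 1) ^ (θ - 1) := mul_le_mul_of_nonneg_right h.le hpow_pos.le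
        have h2 : T * a (k - 1) ^ θ * T ^ (k - 1 : ℤ)
            ≤ T / l * (a k * a (k - 1) ^ (θ - 1) * T ^ (k - 1 : ℤ)) := by
          have h3 : T / l * (l * a (k - 1) ^ θ * T ^ (k - 1 : ℤ))
              ≤ T / l * (a k * a (k - 1) ^ (θ - 1) * T ^ (k - 1 : ℤ)) := by
            apply mul_le_mul_of_nonneg_left _ (by positivity)
            exact mul_le_mul_of_nonneg_right h1 ht.le
          calc T * a (k - 1) ^ θ * T ^ (k - 1 : ℤ)
              = T / l * (l * a (k - 1) ^ θ * T ^ (k - 1 : ℤ)) := by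
                field_simp
            _ ≤ _ := h3
        have h4 : a k ^ θ * (T * T ^ (k - 1 : ℤ)) ≤ T * a (k - 1) ^ θ * T ^ (k - 1 : ℤ) := by
          have := mul_le_mul_of_nonneg_right hmono (mul_nonneg hT0.le ht.le)
          calc a k ^ θ * (T * T ^ (k - 1 : ℤ)) ≤ a (k - 1) ^ θ * (T * T ^ (k - 1 : ℤ)) := this
            _ = T * a (k - 1) ^ θ * T ^ (k - 1 : ℤ) := by ring
        have h5 : (0:ℝ) ≤ 1 / 2 * (a (k - 1) ^ θ * T ^ (k - 1 : ℤ)) := by positivity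
        linarith
  -- shifted summabilities
  have hsum_r' : Summable (fun k : ℤ => r (k - 1)) :=
    hsum_r.comp_injective (sub_left_injective : Function.Injective (· - (1:ℤ)))
  have hsum_b' : Summable (fun k : ℤ => b (k - 1)) :=
    hsum_b.comp_injective (sub_left_injective : Function.Injective (· - (1:ℤ)))
  have htsum_r' : ∑' k : ℤ, r (k - 1) = ∑' k, r k := by
    have := (Equiv.subRight (1:ℤ)).tsum_eq r
    simpa using this
  have htsum_b' : ∑' k : ℤ, b (k - 1) = ∑' k, b k := by
    have := (Equiv.subRight (1:ℤ)).tsum_eq b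
    simpa using this
  have main : ∑' k, b k ≤ (T / l) * ∑' k, r k + (1 / 2) * ∑' k, b k := by
    calc ∑' k, b k ≤ ∑' k : ℤ, ((T / l) * r (k - 1) + (1 / 2) * b (k - 1)) :=
          Summable.tsum_le_tsum key hsum_b ((hsum_r'.mul_left _).add (hsum_b'.mul_left _))
      _ = (T / l) * ∑' k : ℤ, r (k - 1) + (1 / 2) * ∑' k : ℤ, b (k - 1) := by
          rw [Summable.tsum_add (hsum_r'.mul_left _) (hsum_b'.mul_left _), tsum_mul_left, tsum_mul_left]
      _ = (T / l) * ∑' k, r k + (1 / 2) * ∑' k, b k := by rw [htsum_r', htsum_b']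
  have hsub : ∑' k : {k : ℤ // a k ≠ 0},
      a ((k : ℤ) + 1) * a (k : ℤ) ^ (-(2 * s / (n : ℝ))) * T ^ (k : ℤ) = ∑' k, r k := by
    exact tsum_subtype_eq_of_support_subset (s := {k : ℤ | a k ≠ 0}) (by
      intro k hk
      simp only [Function.mem_support, ne_eq] at hk
      simp only [Set.mem_setOf_eq]
      intro h
      exact hk (hr_zero k h))
  rw [hsub]
  have : ∑' k, b k ≤ 2 * T / l * ∑' k, r k := by
    have hring : 2 * T / l * ∑' k, r k = 2 * (T / l * ∑' k, r k) := by ring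
    linarith [main]
  calc ∑' k : ℤ, a k ^ (((n : ℝ) - 2 * s) / n) * T ^ k = ∑' k, b k := rfl
    _ ≤ 2 * T / l * ∑' k, r k := this
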